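/- Let 𝔫 be a finite-dimensional real 2-step nilpotent Lie algebra with complement V∞ of ⁅𝔫, 𝔫⁆, projection π, and norm ‖·‖∞ on V∞. Let d∞ be a metric on 𝔫 whose closed balls are compact in the norm topology of 𝔫 and which satisfies d∞(0, v) = ‖v‖∞ for every v ∈ V∞ and ‖π(h)‖∞ ≤ d∞(0, h) for every h ∈ 𝔫. Then for every g ∈ 𝔫 and every r > 0, the set C(g, r) := {⁅g, y⁆ : y ∈ 𝔫, d∞(0, y) ≤ r} is a compact subset of ⁅𝔫, 𝔫⁆ that is star-convex about 0 (i.e. s·z ∈ C(g, r) whenever z ∈ C(g, r) and s ∈ [0, 1]); if moreover 𝔫 is non-singular and g ∉ ⁅𝔫, 𝔫⁆, then C(g, r) is a neighborhood of 0 in ⁅𝔫, 𝔫⁆. -/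

import Mathlib

noncomputable section

/-- The derived subalgebra ⁅𝔫, 𝔫⁆, as a linear subspace: the span of all brackets. -/
def derivedSubalg (𝔫 : Type*) [LieRing 𝔫] [LieAlgebra ℝ 𝔫] : Submodule ℝ 𝔫 :=
  Submodule.span ℝ {z : 𝔫 | ∃ x y : 𝔫, ⁅x, y⁆ = z}

/-- A 2-step nilpotent Lie algebra is non-singular if every element of `⁅𝔫, 𝔫⁆` is a
bracket `⁅x, y⁆` for every fixed `x ∉ ⁅𝔫, 𝔫⁆`. -/
def Nonsingular (𝔫 : Type*) [LieRing 𝔫] [LieAlgebra ℝ 𝔫] : Prop :=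
  ∀ z ∈ derivedSubalg 𝔫, ∀ x : 𝔫, x ∉ derivedSubalg 𝔫 → ∃ y : 𝔫, ⁅x, y⁆ = z

/-- `d` is a metric, given as a two-variable distance function. -/
structure IsMetricFun {X : Type*} (d : X → X → ℝ) : Prop where
  refl : ∀ x, d x x = 0
  eq_of_dist_eq_zero : ∀ x y, d x y = 0 → x = y
  symm : ∀ x y, d x y = d y x
  triangle : ∀ x y z, d x z ≤ d x y + d y z

/-- `f` is a norm on the subspace `W`. -/
structure IsNormOn {𝔫 : Type*} [AddCommGroup 𝔫] [Module ℝ 𝔫]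
    (W : Submodule ℝ 𝔫) (f : 𝔫 → ℝ) : Prop where
  nonneg : ∀ x ∈ W, 0 ≤ f x
  eq_zero : ∀ x ∈ W, f x = 0 → x = 0
  smul : ∀ (c : ℝ), ∀ x ∈ W, f (c • x) = |c| * f x
  add_le : ∀ x ∈ W, ∀ y ∈ W, f (x + y) ≤ f x + f y

/-- Sublemma 4.2 of the paper: for `g ∈ 𝔫` and `r > 0`, the set
`C(g, r) = {⁅g, y⁆ : dInfty(0, y) ≤ r}` is a compact star-convex (about `0`) subset of
`⁅𝔫, 𝔫⁆`; if moreover `𝔫` is non-singular and `g ∉ ⁅𝔫, 𝔫⁆`, then `C(g, r)` is a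
neighborhood of `0` in `⁅𝔫, 𝔫⁆` (i.e. for the subspace topology on `⁅𝔫, 𝔫⁆`).
The topology on `𝔫` is the (unique) Hausdorff vector topology of the finite-dimensional
real vector space `𝔫`, i.e. the norm topology. -/
theorem commutator_set_compact_starConvex_nbhd {𝔫 : Type*} [LieRing 𝔫] [LieAlgebra ℝ 𝔫]
    [FiniteDimensional ℝ 𝔫] [TopologicalSpace 𝔫] [IsTopologicalAddGroup 𝔫]
    [ContinuousSMul ℝ 𝔫] [T2Space 𝔫]
    (h2 : ∀ x y z : 𝔫, ⁅⁅x, y⁆, z⁆ = 0)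
    (V : Submodule ℝ 𝔫) (hV : IsCompl V (derivedSubalg 𝔫))
    (π : 𝔫 →ₗ[ℝ] 𝔫) (hπmem : ∀ x : 𝔫, π x ∈ V) (hπid : ∀ v ∈ V, π v = v)
    (hπker : ∀ z ∈ derivedSubalg 𝔫, π z = 0)
    (nV : 𝔫 → ℝ) (hnV : IsNormOn V nV)
    (dInfty : 𝔫 → 𝔫 → ℝ) (hdInfty : IsMetricFun dInfty)
    (hballs : ∀ (c : 𝔫) (R : ℝ), IsCompact {x : 𝔫 | dInfty c x ≤ R})
    (hdV : ∀ v ∈ V, dInfty 0 v = nV v)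
    (hdπ : ∀ h : 𝔫, nV (π h) ≤ dInfty 0 h) :
    ∀ (g : 𝔫) (r : ℝ), 0 < r →
      ({z : 𝔫 | ∃ y : 𝔫, dInfty 0 y ≤ r ∧ ⁅g, y⁆ = z} ⊆ (derivedSubalg 𝔫 : Set 𝔫)) ∧
      IsCompact {z : 𝔫 | ∃ y : 𝔫, dInfty 0 y ≤ r ∧ ⁅g, y⁆ = z} ∧
      (∀ z ∈ {z : 𝔫 | ∃ y : 𝔫, dInfty 0 y ≤ r ∧ ⁅g, y⁆ = z}, ∀ s ∈ Set.Icc (0 : ℝ) 1,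
        s • z ∈ {z : 𝔫 | ∃ y : 𝔫, dInfty 0 y ≤ r ∧ ⁅g, y⁆ = z}) ∧
      (Nonsingular 𝔫 → g ∉ derivedSubalg 𝔫 →
        {z : 𝔫 | ∃ y : 𝔫, dInfty 0 y ≤ r ∧ ⁅g, y⁆ = z} ∈
          nhdsWithin (0 : 𝔫) (derivedSubalg 𝔫 : Set 𝔫)) := by
  intro g r hr
  set C : Set 𝔫 := {z : 𝔫 | ∃ y : 𝔫, dInfty 0 y ≤ r ∧ ⁅g, y⁆ = z} with hC
  -- derived subalgebra is central
  have hcentral : ∀ w ∈ derivedSubalg 𝔫, ∀ x : 𝔫, ⁅x, w⁆ = 0 := by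
    intro w hw x
    have : derivedSubalg 𝔫 ≤ LinearMap.ker (LieAlgebra.ad ℝ 𝔫 x) := by
      rw [derivedSubalg, Submodule.span_le]
      rintro _ ⟨a, b, rfl⟩
      simp only [SetLike.mem_coe, LinearMap.mem_ker, LieAlgebra.ad_apply]
      rw [← lie_skew, h2, neg_zero]
    simpa using this hw
  have hnV0 : nV 0 = 0 := by
    have := hnV.smul 0 0 V.zero_mem
    simpa using this
  -- decomposition : π y differs from y by central element
  have hbr : ∀ y : 𝔫, ⁅g, π y⁆ = ⁅g, y⁆ := by
    intro y
    obtain ⟨v, hv, w, hw, hvw⟩ := Submodule.mem_sup.1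
      (by rw [hV.sup_eq_top]; exact Submodule.mem_top : y ∈ V ⊔ derivedSubalg 𝔫)
    have hπy : π y = v := by
      rw [← hvw, map_add, hπid v hv, hπker w hw, add_zero]
    rw [hπy, ← hvw, lie_add, hcentral w hw, add_zero]
  have hsub : C ⊆ (derivedSubalg 𝔫 : Set 𝔫) := by
    rintro _ ⟨y, _, rfl⟩
    exact Submodule.subset_span ⟨g, y, rfl⟩
  refine ⟨hsub, ?_, ?_, ?_⟩
  · -- compactness
    have : C = (fun y : 𝔫 => ⁅g, y⁆) '' {y : 𝔫 | dInfty 0 y ≤ r} := by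
      ext z; constructor
      · rintro ⟨y, hy, rfl⟩; exact ⟨y, hy, rfl⟩
      · rintro ⟨y, hy, rfl⟩; exact ⟨y, hy, rfl⟩
    rw [this]
    exact (hballs 0 r).image (LieAlgebra.ad ℝ 𝔫 g).continuous_of_finiteDimensional
  · -- star convexity
    rintro _ ⟨y, hy, rfl⟩ s ⟨hs0, hs1⟩
    refine ⟨s • π y, ?_, ?_⟩
    · have h1 : dInfty 0 (s • π y) = nV (s • π y) :=
        hdV _ (V.smul_mem s (hπmem y))
      have h2' : nV (s • π y) = s * nV (π y) := by
        rw [hnV.smul s (π y) (hπmem y), abs_of_nonneg hs0]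
      have h3 : nV (π y) ≤ r := (hdπ y).trans hy
      have : s * nV (π y) ≤ 1 * r :=
        mul_le_mul hs1 h3 (hnV.nonneg _ (hπmem y)) zero_le_one
      rw [h1, h2']
      linarith
    · rw [lie_smul, hbr]
  · -- neighborhood
    intro hns hg
    -- the linear map V → derivedSubalg, v ↦ ⁅g, v⁆
    let T : V →ₗ[ℝ] derivedSubalg 𝔫 :=
      { toFun := fun v => ⟨⁅g, (v : 𝔫)⁆, Submodule.subset_span ⟨g, v, rfl⟩⟩
        map_add' := fun a b => by ext; simp [lie_add]
        map_smul' := fun c a => by ext; simp [lie_smul] }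
    have hTsurj : Function.Surjective T := by
      rintro ⟨z, hz⟩
      obtain ⟨y, hy⟩ := hns z hz g hg
      refine ⟨⟨π y, hπmem y⟩, ?_⟩
      ext
      simp only [T, LinearMap.coe_mk, AddHom.coe_mk]
      rw [hbr, hy]
    have hTopen : IsOpenMap T := T.isOpenMap_of_finiteDimensional hTsurj
    -- a continuous upper bound for nV on V
    obtain ⟨n, b⟩ := Module.Free.exists_basis (R := ℝ) (M := V)
    have hfin : Fintype n := FiniteDimensional.fintypeBasisIndex b
    let f : V → ℝ := fun v => ∑ i, |b.equivFun v i| * nV (b i : 𝔫)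
    have hfcont : Continuous f := by
      refine continuous_finset_sum _ fun i _ => Continuous.mul ?_ continuous_const
      exact ((LinearMap.proj i).comp
        (b.equivFun : V →ₗ[ℝ] (n → ℝ))).continuous_of_finiteDimensional.abs
    have hnVsum : ∀ (s : Finset n) (φ : n → V),
        nV ((∑ i ∈ s, φ i : V) : 𝔫) ≤ ∑ i ∈ s, nV (φ i : 𝔫) := by
      intro s φ
      induction s using Finset.cons_induction with
      | empty => simp [hnV0]
      | cons a s ha ih =>
        rw [Finset.sum_cons, Finset.sum_cons, Submodule.coe_add]
        exact (hnV.add_le _ (φ a).2 _ (by exact (∑ i ∈ s, φ i : V).2)).trans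
          (by linarith)
    have hbound : ∀ v : V, nV (v : 𝔫) ≤ f v := by
      intro v
      conv_lhs => rw [← b.sum_equivFun v]
      refine (hnVsum Finset.univ _).trans ?_
      refine Finset.sum_le_sum fun i _ => ?_
      rw [Submodule.coe_smul, hnV.smul _ _ (b i).2]
    -- the open preimage
    have hf0 : f 0 = 0 := by simp [f]
    have hU : f ⁻¹' Set.Iio r ∈ nhds (0 : V) :=
      (hfcont.isOpen_preimage _ isOpen_Iio).mem_nhds (by simp [hf0, hr])
    have hTU : T '' (f ⁻¹' Set.Iio r) ∈ nhds (0 : derivedSubalg 𝔫) := by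
      have : T (0 : V) = 0 := map_zero T
      exact (hTopen _ (hfcont.isOpen_preimage _ isOpen_Iio)).mem_nhds
        ⟨0, by simp [hf0, hr], this⟩
    have h0mem : (0 : 𝔫) ∈ (derivedSubalg 𝔫 : Set 𝔫) := (derivedSubalg 𝔫).zero_mem
    rw [nhdsWithin_eq_map_subtype_coe h0mem, Filter.mem_map]
    refine Filter.mem_of_superset hTU ?_
    rintro _ ⟨v, hv, rfl⟩
    refine ⟨(v : 𝔫), ?_, rfl⟩
    rw [hdV _ v.2]
    exact (hbound v).trans (le_of_lt hv)
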